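/- arXiv:1803.03783 — 2 statements merged into one kernel-verified Lean document; each statement's English description precedes it below -/
import Mathlib

section
/- Let 0 < α, 0 < ρ, 0 < a and β > -1. For the function u(t) = ((t^ρ - a^ρ)/ρ)^β and every t > a, the Katugampola fractional integral satisfies I_{a+}^{α,ρ} u(t) = (Γ(β+1)/Γ(α+β+1)) · ((t^ρ - a^ρ)/ρ)^{β+α}. -/
open MeasureTheory Real Set

/-- The Katugampola fractional integral
`I_{a+}^{α,ρ} u(t) = (ρ^{1-α}/Γ(α)) ∫_a^t s^{ρ-1} u(s) / (t^ρ - s^ρ)^{1-α} ds`. -/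
noncomputable def katugampolaIntegral (α ρ a : ℝ) (u : ℝ → ℝ) (t : ℝ) : ℝ :=
  ρ ^ (1 - α) / Real.Gamma α *
    ∫ s in a..t, s ^ (ρ - 1) * u s / (t ^ ρ - s ^ ρ) ^ (1 - α)

lemma real_beta {p q : ℝ} (hp : 0 < p) (hq : 0 < q) :
    ∫ x in (0:ℝ)..1, x ^ (p - 1) * (1 - x) ^ (q - 1)
      = Real.Gamma p * Real.Gamma q / Real.Gamma (p + q) := by
  have h := Complex.Gamma_mul_Gamma_eq_betaIntegral (s := (p:ℂ)) (t := (q:ℂ))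
    (by simpa using hp) (by simpa using hq)
  have hbeta : Complex.betaIntegral (p:ℂ) (q:ℂ)
      = ((∫ x in (0:ℝ)..1, x ^ (p - 1) * (1 - x) ^ (q - 1) : ℝ) : ℂ) := by
    rw [Complex.betaIntegral, ← intervalIntegral.integral_ofReal]
    refine intervalIntegral.integral_congr fun x hx => ?_
    rw [uIcc_of_le (by norm_num : (0:ℝ) ≤ 1)] at hx
    have h1 : (0:ℝ) ≤ x := hx.1
    have h2 : (0:ℝ) ≤ 1 - x := by linarith [hx.2]
    rw [show ((p:ℂ) - 1) = ((p - 1 : ℝ) : ℂ) by push_cast; ring,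
      show ((q:ℂ) - 1) = ((q - 1 : ℝ) : ℂ) by push_cast; ring,
      show (1 - (x:ℂ)) = ((1 - x : ℝ) : ℂ) by push_cast; ring,
      ← Complex.ofReal_cpow h1, ← Complex.ofReal_cpow h2, ← Complex.ofReal_mul]
  rw [hbeta, show ((p:ℂ) + (q:ℂ)) = ((p + q : ℝ) : ℂ) by push_cast; ring,
    Complex.Gamma_ofReal, Complex.Gamma_ofReal, Complex.Gamma_ofReal] at h
  have hpq : Real.Gamma (p + q) ≠ 0 := (Real.Gamma_pos_of_pos (by linarith)).ne'
  have h' : Real.Gamma p * Real.Gamma q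
      = Real.Gamma (p + q) * ∫ x in (0:ℝ)..1, x ^ (p - 1) * (1 - x) ^ (q - 1) := by
    exact_mod_cast h
  field_simp [h']
  rw [h']; ring

/-- Katugampola fractional integral of the power function `u(t) = ((t^ρ - a^ρ)/ρ)^β`. -/
theorem katugampolaIntegral_power (α β ρ a : ℝ) (hα : 0 < α) (hβ : -1 < β)
    (hρ : 0 < ρ) (ha : 0 < a) (t : ℝ) (ht : a < t) :
    katugampolaIntegral α ρ a (fun s => ((s ^ ρ - a ^ ρ) / ρ) ^ β) t
      = Real.Gamma (β + 1) / Real.Gamma (α + β + 1) * ((t ^ ρ - a ^ ρ) / ρ) ^ (β + α) := by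
  have hta : a ^ ρ < t ^ ρ := Real.rpow_lt_rpow ha.le ht hρ
  set D : ℝ := t ^ ρ - a ^ ρ with hD
  have hD0 : 0 < D := sub_pos.mpr hta
  set f : ℝ → ℝ := fun s => (s ^ ρ - a ^ ρ) / D with hf
  set f' : ℝ → ℝ := fun s => ρ * s ^ (ρ - 1) / D with hf'
  set g : ℝ → ℝ := fun x => x ^ β * (1 - x) ^ (α - 1) with hg
  have hderiv : ∀ s ∈ Ioo a t, HasDerivWithinAt f (f' s) (Ioo a t) s := by
    intro s hs
    have hs0 : s ≠ 0 := ne_of_gt (lt_trans ha hs.1)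
    exact (((Real.hasDerivAt_rpow_const (p := ρ) (Or.inl hs0)).sub_const
      (a ^ ρ)).div_const D).hasDerivWithinAt
  have hinj : InjOn f (Ioo a t) := by
    have hmono : StrictMonoOn f (Ioo a t) := by
      intro x hx y hy hxy
      have hxy' : x ^ ρ < y ^ ρ := Real.rpow_lt_rpow (le_of_lt (ha.trans hx.1)) hxy hρ
      exact div_lt_div_of_pos_right (by linarith) hD0
    exact hmono.injOn
  have himg : f '' Ioo a t = Ioo 0 1 := by
    ext y
    constructor
    · rintro ⟨s, hs, rfl⟩
      have h1 : a ^ ρ < s ^ ρ := Real.rpow_lt_rpow ha.le hs.1 hρ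
      have h2 : s ^ ρ < t ^ ρ := Real.rpow_lt_rpow (le_of_lt (ha.trans hs.1)) hs.2 hρ
      exact ⟨div_pos (by linarith) hD0, (div_lt_one hD0).mpr (by simp [hD]; linarith)⟩
    · intro hy
      have hz1 : a ^ ρ < a ^ ρ + y * D := by nlinarith [hy.1, hy.2]
      have hz2 : a ^ ρ + y * D < t ^ ρ := by nlinarith [hy.1, hy.2]
      have hz0 : (0:ℝ) < a ^ ρ + y * D :=
        lt_trans (Real.rpow_pos_of_pos ha ρ) hz1
      refine ⟨(a ^ ρ + y * D) ^ (1/ρ), ⟨?_, ?_⟩, ?_⟩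
      · have : (a ^ ρ) ^ (1/ρ) < (a ^ ρ + y * D) ^ (1/ρ) :=
          Real.rpow_lt_rpow (Real.rpow_pos_of_pos ha ρ).le hz1 (by positivity)
        have ha' : (a ^ ρ) ^ (1/ρ) = a := by
          rw [← Real.rpow_mul ha.le, mul_one_div, div_self hρ.ne', Real.rpow_one]
        rwa [ha'] at this
      · have : (a ^ ρ + y * D) ^ (1/ρ) < (t ^ ρ) ^ (1/ρ) :=
          Real.rpow_lt_rpow hz0.le hz2 (by positivity)
        rwa [← Real.rpow_mul (lt_trans ha ht).le, mul_one_div, div_self hρ.ne',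
          Real.rpow_one] at this
      · have hpow : ((a ^ ρ + y * D) ^ (1/ρ)) ^ ρ = a ^ ρ + y * D := by
          rw [← Real.rpow_mul hz0.le, one_div, inv_mul_cancel₀ hρ.ne', Real.rpow_one]
        simp only [hf, hpow]
        field_simp
        ring
  have hchange : ∫ x in Ioo (0:ℝ) 1, g x = ∫ s in Ioo a t, |f' s| * g (f s) := by
    rw [← himg]
    simpa [smul_eq_mul] using
      integral_image_eq_integral_abs_deriv_smul measurableSet_Ioo hderiv hinj g
  have hstep1 : (∫ s in a..t, s ^ (ρ - 1) * ((s ^ ρ - a ^ ρ) / ρ) ^ β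
        / (t ^ ρ - s ^ ρ) ^ (1 - α))
      = ∫ s in Ioo a t, ρ ^ (-β) * (D ^ (β + α) / ρ) * (|f' s| * g (f s)) := by
    rw [intervalIntegral.integral_of_le ht.le, integral_Ioc_eq_integral_Ioo]
    refine setIntegral_congr_fun measurableSet_Ioo fun s hs => ?_
    have hs0 : 0 < s := ha.trans hs.1
    have hA : 0 < s ^ ρ - a ^ ρ := sub_pos.mpr (Real.rpow_lt_rpow ha.le hs.1 hρ)
    have hB : 0 < t ^ ρ - s ^ ρ := sub_pos.mpr (Real.rpow_lt_rpow hs0.le hs.2 hρ)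
    have habs : |f' s| = ρ * s ^ (ρ - 1) / D := by
      rw [hf']
      exact abs_of_pos (by positivity)
    have h1f : 1 - f s = (t ^ ρ - s ^ ρ) / D := by
      rw [hf]
      field_simp [hD]
      rw [hD]; ring
    rw [habs]
    simp only [hg, h1f]
    simp only [hf]
    rw [Real.div_rpow hA.le hρ.le, Real.div_rpow hA.le hD0.le,
      Real.div_rpow hB.le hD0.le,
      show (1:ℝ) - α = -(α - 1) by ring, Real.rpow_neg hB.le,
      Real.rpow_neg hρ.le β,
      show D ^ (β + α) = D ^ β * D ^ (α - 1) * D by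
        rw [← Real.rpow_add hD0, ← Real.rpow_add_one hD0.ne']
        congr 1
        ring]
    have hDβ : D ^ β ≠ 0 := (Real.rpow_pos_of_pos hD0 β).ne'
    have hDα : D ^ (α - 1) ≠ 0 := (Real.rpow_pos_of_pos hD0 (α - 1)).ne'
    have hρβ : ρ ^ β ≠ 0 := (Real.rpow_pos_of_pos hρ β).ne'
    have hBα : (t ^ ρ - s ^ ρ) ^ (α - 1) ≠ 0 := (Real.rpow_pos_of_pos hB _).ne'
    field_simp
  have hbeta : ∫ x in Ioo (0:ℝ) 1, g x
      = Real.Gamma (β + 1) * Real.Gamma α / Real.Gamma (α + β + 1) := by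
    rw [← integral_Ioc_eq_integral_Ioo, ← intervalIntegral.integral_of_le (by norm_num : (0:ℝ) ≤ 1)]
    have := real_beta (p := β + 1) (q := α) (by linarith) hα
    simp only [add_sub_cancel_right] at this
    rw [hg]
    simp only [add_sub_cancel_right] at this ⊢
    rw [show (β + 1 + α) = α + β + 1 by ring] at this
    exact this
  have hΓα : Real.Gamma α ≠ 0 := (Real.Gamma_pos_of_pos hα).ne'
  have hΓs : Real.Gamma (α + β + 1) ≠ 0 := (Real.Gamma_pos_of_pos (by linarith)).ne'
  rw [katugampolaIntegral, hstep1, integral_const_mul, ← hchange, hbeta]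
  rw [Real.div_rpow hD0.le hρ.le]
  have hρpow : ρ ^ (1 - α) * (ρ ^ (-β) / ρ) = (ρ ^ (β + α))⁻¹ := by
    rw [div_eq_mul_inv, ← Real.rpow_neg_one ρ, ← Real.rpow_add hρ, ← Real.rpow_add hρ,
      ← Real.rpow_neg hρ.le]
    congr 1
    ring
  have hre : ρ ^ (1 - α) / Real.Gamma α *
      (ρ ^ (-β) * (D ^ (β + α) / ρ) * (Real.Gamma (β + 1) * Real.Gamma α / Real.Gamma (α + β + 1)))
      = ρ ^ (1 - α) * (ρ ^ (-β) / ρ) *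
        (D ^ (β + α) * (Real.Gamma (β + 1) / Real.Gamma (α + β + 1))) *
        (Real.Gamma α / Real.Gamma α) := by
    ring
  rw [hre, div_self hΓα, mul_one, hρpow]
  ring
end

section
/- Let 0 < α < 1, ρ > 0, a > 0, λ ∈ ℂ, c ∈ ℂ, and let h be a continuous function on [a, ∞). Define the successive approximations u₀(t) = c and u_{n+1}(t) = c + λ · I_{a+}^{α,ρ} u_n(t) + I_{a+}^{α,ρ} h(t) for n ≥ 0. Then for every n ≥ 1 and every t ≥ a, u_n(t) = c · ∑_{k=0}^{n} (λ^k / Γ(kα + 1)) ((t^ρ - a^ρ)/ρ)^{kα} + ∫_a^t ((t^ρ - s^ρ)/ρ)^{α-1} s^{ρ-1} ( ∑_{k=0}^{n-1} (λ^k / Γ(αk + α)) ((t^ρ - s^ρ)/ρ)^{αk} ) h(s) ds. -/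
open Real Set MeasureTheory

/-- The Katugampola fractional integral of a complex-valued function:
`I_{a+}^{α,ρ} u(t) = (ρ^{1-α}/Γ(α)) ∫_a^t s^{ρ-1} u(s) / (t^ρ - s^ρ)^{1-α} ds`. -/
noncomputable def katugampolaIntegralC (α ρ a : ℝ) (u : ℝ → ℂ) (t : ℝ) : ℂ :=
  ((ρ ^ (1 - α) / Real.Gamma α : ℝ) : ℂ) *
    ∫ s in a..t, ((s ^ (ρ - 1) : ℝ) : ℂ) * u s / (((t ^ ρ - s ^ ρ) ^ (1 - α) : ℝ) : ℂ)


namespace SAF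

lemma integrableOn_Tsub_rpow (A T r : ℝ) (hr : -1 < r) :
    IntegrableOn (fun v => (T - v) ^ r) (Ioo A T) := by
  rcases le_or_gt T A with hTA | hTA
  · rw [Ioo_eq_empty (by exact fun h => absurd (h.trans_le hTA) (lt_irrefl A))]
    exact integrableOn_empty
  · have h1 : IntervalIntegrable (fun x : ℝ => x ^ r) volume 0 (T - A) :=
      intervalIntegral.intervalIntegrable_rpow' hr
    have h2 := h1.comp_sub_left T
    rw [show T - (T - A) = A by ring, sub_zero] at h2
    exact ((intervalIntegrable_iff_integrableOn_Ioo_of_le (le_of_lt hTA)).mp h2.symm)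

/-- Value of `∫ v in Ioo A T, (T - v)^r`. -/
lemma integral_Tsub_rpow (A T r : ℝ) (hr : -1 < r) (hAT : A ≤ T) :
    ∫ v in Ioo A T, (T - v) ^ r = (T - A) ^ (r + 1) / (r + 1) := by
  have h1 : (∫ v in A..T, (T - v) ^ r) = ∫ x in T - T..T - A, x ^ r :=
    intervalIntegral.integral_comp_sub_left (fun x : ℝ => x ^ r) T
  rw [intervalIntegral.integral_of_le hAT, integral_Ioc_eq_integral_Ioo] at h1
  rw [h1, sub_self, integral_rpow (Or.inl hr), Real.zero_rpow (by linarith),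
    sub_zero]


lemma image_rpow_Ioo {ρ a t : ℝ} (hρ : 0 < ρ) (ha : 0 < a) (hat : a < t) :
    (fun s : ℝ => s ^ ρ) '' Ioo a t = Ioo (a ^ ρ) (t ^ ρ) := by
  have ht : 0 < t := ha.trans hat
  ext v
  constructor
  · rintro ⟨s, ⟨has, hst⟩, rfl⟩
    exact ⟨Real.rpow_lt_rpow ha.le has hρ,
      Real.rpow_lt_rpow (ha.trans has).le hst hρ⟩
  · rintro ⟨hav, hvt⟩
    have hv : 0 < v := lt_trans (Real.rpow_pos_of_pos ha ρ) hav
    refine ⟨v ^ ρ⁻¹, ⟨?_, ?_⟩, Real.rpow_inv_rpow hv.le hρ.ne'⟩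
    · have := Real.rpow_lt_rpow (Real.rpow_pos_of_pos ha ρ).le hav (by positivity : 0 < ρ⁻¹)
      rwa [Real.rpow_rpow_inv ha.le hρ.ne'] at this
    · have := Real.rpow_lt_rpow hv.le hvt (by positivity : 0 < ρ⁻¹)
      rwa [Real.rpow_rpow_inv ht.le hρ.ne'] at this

lemma injOn_rpow_Ioo {ρ a t : ℝ} (hρ : 0 < ρ) (ha : 0 < a) :
    InjOn (fun s : ℝ => s ^ ρ) (Ioo a t) := by
  have : StrictMonoOn (fun s : ℝ => s ^ ρ) (Ioo a t) := fun x hx y hy hxy =>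
    Real.rpow_lt_rpow (ha.trans hx.1).le hxy hρ
  exact this.injOn

lemma hasDeriv_rpow_Ioo {ρ a t : ℝ} (ha : 0 < a) :
    ∀ s ∈ Ioo a t, HasDerivWithinAt (fun x : ℝ => x ^ ρ) (ρ * s ^ (ρ - 1)) (Ioo a t) s :=
  fun s hs => (Real.hasDerivAt_rpow_const (Or.inl (ha.trans hs.1).ne')).hasDerivWithinAt

/-- Change of variables `v = s ^ ρ` for set integrals over `Ioo`. -/
lemma cov {ρ a t : ℝ} (hρ : 0 < ρ) (ha : 0 < a) (hat : a < t) (G : ℝ → ℂ) :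
    ∫ v in Ioo (a ^ ρ) (t ^ ρ), G v
      = ∫ s in Ioo a t, (ρ * s ^ (ρ - 1)) • G (s ^ ρ) := by
  rw [← image_rpow_Ioo hρ ha hat,
    integral_image_eq_integral_abs_deriv_smul measurableSet_Ioo (hasDeriv_rpow_Ioo ha)
      (injOn_rpow_Ioo hρ ha) G]
  refine setIntegral_congr_fun measurableSet_Ioo fun s hs => ?_
  rw [abs_of_pos (by have := ha.trans hs.1; positivity)]

lemma cov_integrableOn {ρ a t : ℝ} (hρ : 0 < ρ) (ha : 0 < a) (hat : a < t) {G : ℝ → ℂ}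
    (hG : IntegrableOn G (Ioo (a ^ ρ) (t ^ ρ))) :
    IntegrableOn (fun s => (ρ * s ^ (ρ - 1)) • G (s ^ ρ)) (Ioo a t) := by
  rw [← image_rpow_Ioo hρ ha hat] at hG
  exact (integrableOn_image_iff_integrableOn_abs_deriv_smul measurableSet_Ioo
      (hasDeriv_rpow_Ioo ha) (injOn_rpow_Ioo hρ ha) G).mp hG |>.congr_fun
    (fun s hs => by dsimp only; rw [abs_of_pos (by have := ha.trans hs.1; positivity)]) measurableSet_Ioo


/-- The real Beta integral. -/
lemma real_beta {p q : ℝ} (hp : 0 < p) (hq : 0 < q) :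
    ∫ x in (0:ℝ)..1, x ^ (p - 1) * (1 - x) ^ (q - 1)
      = Real.Gamma p * Real.Gamma q / Real.Gamma (p + q) := by
  have hbeta := Complex.Gamma_mul_Gamma_eq_betaIntegral
    (s := (p : ℂ)) (t := (q : ℂ)) (by simpa using hp) (by simpa using hq)
  have hofReal : Complex.betaIntegral (p : ℂ) (q : ℂ)
      = ((∫ x in (0:ℝ)..1, x ^ (p - 1) * (1 - x) ^ (q - 1) : ℝ) : ℂ) := by
    rw [Complex.betaIntegral, ← intervalIntegral.integral_ofReal]
    refine intervalIntegral.integral_congr fun x hx => ?_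
    rw [uIcc_of_le (by norm_num : (0:ℝ) ≤ 1)] at hx
    rw [Complex.ofReal_mul, Complex.ofReal_cpow hx.1, Complex.ofReal_cpow (by linarith [hx.2])]
    push_cast
    ring_nf
  rw [hofReal, show ((p:ℂ) + (q:ℂ)) = ((p + q : ℝ) : ℂ) by push_cast; ring,
    Complex.Gamma_ofReal, Complex.Gamma_ofReal, Complex.Gamma_ofReal] at hbeta
  have hne : Real.Gamma (p + q) ≠ 0 := (Real.Gamma_pos_of_pos (by linarith)).ne'
  have hr : Real.Gamma p * Real.Gamma q
      = Real.Gamma (p + q) * ∫ x in (0:ℝ)..1, x ^ (p - 1) * (1 - x) ^ (q - 1) := by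
    exact_mod_cast hbeta
  rw [eq_div_iff hne, hr]; ring

/-- Beta-type integral over `Ioo A T`. -/
lemma rl_beta {A T p q : ℝ} (hAT : A < T) (hp : 0 < p) (hq : 0 < q) :
    ∫ v in Ioo A T, (T - v) ^ (p - 1) * (v - A) ^ (q - 1)
      = Real.Gamma p * Real.Gamma q / Real.Gamma (p + q) * (T - A) ^ (p + q - 1) := by
  have hTA : 0 < T - A := by linarith
  have h1 : ∫ v in Ioo A T, (T - v) ^ (p - 1) * (v - A) ^ (q - 1)
      = ∫ v in A..T, (T - v) ^ (p - 1) * (v - A) ^ (q - 1) := by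
    rw [intervalIntegral.integral_of_le hAT.le, integral_Ioc_eq_integral_Ioo]
  have h2 := intervalIntegral.integral_comp_mul_add
    (f := fun v => (T - v) ^ (p - 1) * (v - A) ^ (q - 1)) (a := 0) (b := 1)
    (c := T - A) hTA.ne' A
  rw [mul_zero, zero_add, mul_one, show T - A + A = T by ring] at h2
  have h3 : (∫ x in (0:ℝ)..1, (T - ((T - A) * x + A)) ^ (p - 1) * ((T - A) * x + A - A) ^ (q - 1))
      = (T - A) ^ (p - 1) * (T - A) ^ (q - 1)
        * ∫ x in (0:ℝ)..1, (1 - x) ^ (p - 1) * x ^ (q - 1) := by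
    rw [← intervalIntegral.integral_const_mul]
    refine intervalIntegral.integral_congr fun x hx => ?_
    rw [uIcc_of_le (by norm_num : (0:ℝ) ≤ 1)] at hx
    have e1 : T - ((T - A) * x + A) = (T - A) * (1 - x) := by ring
    have e2 : (T - A) * x + A - A = (T - A) * x := by ring
    rw [e1, e2, Real.mul_rpow hTA.le (by linarith [hx.2]), Real.mul_rpow hTA.le hx.1]
    ring
  have h4 : (∫ x in (0:ℝ)..1, (1 - x) ^ (p - 1) * x ^ (q - 1))
      = Real.Gamma q * Real.Gamma p / Real.Gamma (q + p) := by
    rw [← real_beta hq hp]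
    refine intervalIntegral.integral_congr fun x hx => by ring
  have h5 : (∫ v in A..T, (T - v) ^ (p - 1) * (v - A) ^ (q - 1))
      = (T - A) * ∫ x in (0:ℝ)..1,
          (T - ((T - A) * x + A)) ^ (p - 1) * ((T - A) * x + A - A) ^ (q - 1) := by
    rw [h2, smul_eq_mul]; field_simp
  rw [h1, h5, h3, h4, show p + q - 1 = 1 + ((p - 1) + (q - 1)) by ring,
    Real.rpow_add hTA, Real.rpow_add hTA, Real.rpow_one, add_comm q p]
  ring


variable {E : Type*} [NormedAddCommGroup E] [NormedSpace ℝ E]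

/-- Integrability of a singular kernel times a continuous function. -/
lemma ker_cont_integrableOn {A c r : ℝ} (hr : -1 < r) {f : ℝ → E} (hf : Continuous f) :
    IntegrableOn (fun w => ((c - w) ^ r : ℝ) • f w) (Ioo A c) := by
  obtain ⟨C, hC⟩ := (isCompact_Icc (a := A) (b := c)).exists_bound_of_continuousOn hf.continuousOn
  refine Integrable.smul_of_top_left (integrableOn_Tsub_rpow A c r hr) ?_
  refine memLp_top_of_bound (hf.aestronglyMeasurable.restrict) C ?_
  exact (ae_restrict_iff' measurableSet_Ioo).mpr
    (Filter.Eventually.of_forall fun w hw => hC w (Ioo_subset_Icc_self hw))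

lemma Ioo_inter_Iio {A T v : ℝ} (hv : v ≤ T) : Iio v ∩ Ioo A T = Ioo A v := by
  ext w
  simp only [mem_inter_iff, mem_Iio, mem_Ioo]
  exact ⟨fun ⟨h1, h2, _⟩ => ⟨h2, h1⟩, fun ⟨h1, h2⟩ => ⟨h2, h1, lt_of_lt_of_le h2 hv⟩⟩

lemma Ioo_inter_Ioi {A T w : ℝ} (hw : A ≤ w) : Ioi w ∩ Ioo A T = Ioo w T := by
  ext v
  simp only [mem_inter_iff, mem_Ioi, mem_Ioo]
  exact ⟨fun ⟨h1, _, h2⟩ => ⟨h1, h2⟩, fun ⟨h1, h2⟩ => ⟨h1, lt_of_le_of_lt hw h1, h2⟩⟩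

/-- Dirichlet / semigroup formula for Riemann–Liouville-type kernels, together with
integrability of the outer integrand. -/
lemma rl_main {A T p q : ℝ} (hAT : A < T) (hp : 0 < p) (hq : 0 < q)
    {f : ℝ → ℂ} (hf : Continuous f) :
    IntegrableOn (fun v => ((T - v) ^ (p - 1) : ℝ) •
        ∫ w in Ioo A v, ((v - w) ^ (q - 1) : ℝ) • f w) (Ioo A T) ∧
    (∫ v in Ioo A T, ((T - v) ^ (p - 1) : ℝ) • ∫ w in Ioo A v, ((v - w) ^ (q - 1) : ℝ) • f w)
      = (Real.Gamma p * Real.Gamma q / Real.Gamma (p + q)) •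
          ∫ w in Ioo A T, ((T - w) ^ (p + q - 1) : ℝ) • f w := by
  obtain ⟨C₀, hC₀⟩ :=
    (isCompact_Icc (a := A) (b := T)).exists_bound_of_continuousOn hf.continuousOn
  set C := max C₀ 0 with hCdef
  have hC : ∀ x ∈ Icc A T, ‖f x‖ ≤ C := fun x hx => (hC₀ x hx).trans (le_max_left _ _)
  have hC0 : 0 ≤ C := le_max_right _ _
  set μ := volume.restrict (Ioo A T) with hμ
  set g : ℝ × ℝ → ℂ := fun z => ((T - z.1) ^ (p - 1) * (z.1 - z.2) ^ (q - 1) : ℝ) • f z.2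
    with hg
  set F : ℝ × ℝ → ℂ := fun z => Set.indicator {z : ℝ × ℝ | z.2 < z.1} g z with hF
  -- sections in the second variable
  have hFw : ∀ v, (fun w => F (v, w))
      = Set.indicator (Iio v) (fun w => ((T - v) ^ (p - 1) * (v - w) ^ (q - 1) : ℝ) • f w) := by
    intro v
    ext w
    by_cases hw : w < v <;>
      simp [hF, hg, Set.indicator_apply, hw, Set.mem_setOf_eq, Set.mem_Iio]
  have hFv : ∀ w, (fun v => F (v, w))
      = Set.indicator (Ioi w) (fun v => ((T - v) ^ (p - 1) * (v - w) ^ (q - 1) : ℝ) • f w) := by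
    intro w
    ext v
    by_cases hw : w < v <;>
      simp [hF, hg, Set.indicator_apply, hw, Set.mem_setOf_eq, Set.mem_Ioi]
  -- measurability
  have hgm : Measurable g := by
    refine Measurable.smul
      (f := fun z : ℝ × ℝ => ((T - z.1) ^ (p - 1) * (z.1 - z.2) ^ (q - 1) : ℝ))
      (g := fun z : ℝ × ℝ => f z.2) ?_ ?_
    · fun_prop
    · exact hf.measurable.comp measurable_snd
  have hFm' : Measurable F :=
    hgm.indicator (measurableSet_lt measurable_snd measurable_fst)
  have hFm : AEStronglyMeasurable F (μ.prod μ) := hFm'.aestronglyMeasurable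
  -- integrability of sections
  have hrest : ∀ v, A < v → v ≤ T → μ.restrict (Iio v) = volume.restrict (Ioo A v) := by
    intro v _ hvT
    rw [hμ, Measure.restrict_restrict measurableSet_Iio, Ioo_inter_Iio hvT]
  have hsecInt : ∀ v ∈ Ioo A T, Integrable (fun w => F (v, w)) μ := by
    intro v hv
    rw [hFw v, integrable_indicator_iff measurableSet_Iio]
    show Integrable _ (μ.restrict (Iio v))
    rw [hrest v hv.1 hv.2.le]
    have heq : (fun w => ((T - v) ^ (p - 1) * (v - w) ^ (q - 1) : ℝ) • f w)
        = fun w => ((T - v) ^ (p - 1) : ℝ) • (((v - w) ^ (q - 1) : ℝ) • f w) := by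
      ext w; rw [mul_smul]
    rw [heq]
    exact (ker_cont_integrableOn (A := A) (c := v) (r := q - 1) (by linarith) hf).smul ((T - v) ^ (p - 1))
  -- value of sections (second variable)
  have hsecVal : ∀ v ∈ Ioo A T,
      (∫ w, F (v, w) ∂μ)
        = ((T - v) ^ (p - 1) : ℝ) • ∫ w in Ioo A v, ((v - w) ^ (q - 1) : ℝ) • f w := by
    intro v hv
    rw [hFw v, integral_indicator measurableSet_Iio, hμ,
      Measure.restrict_restrict measurableSet_Iio, Ioo_inter_Iio hv.2.le]
    rw [show (fun w => ((T - v) ^ (p - 1) * (v - w) ^ (q - 1) : ℝ) • f w)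
        = fun w => ((T - v) ^ (p - 1) : ℝ) • (((v - w) ^ (q - 1) : ℝ) • f w) by
      ext w; rw [mul_smul]]
    exact integral_smul _ _
  -- bound for the norm sections
  have hnormVal : ∀ v ∈ Ioo A T, (∫ w, ‖F (v, w)‖ ∂μ) ≤ (C * (T - A) ^ q / q) * (T - v) ^ (p - 1) := by
    intro v hv
    have h1 : (∫ w, ‖F (v, w)‖ ∂μ)
        = ∫ w in Ioo A v, ((T - v) ^ (p - 1) * (v - w) ^ (q - 1)) * ‖f w‖ := by
      have hnorm : (fun w => ‖F (v, w)‖)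
          = Set.indicator (Iio v)
            (fun w => ‖((T - v) ^ (p - 1) * (v - w) ^ (q - 1) : ℝ) • f w‖) := by
        ext w
        rw [show F (v, w) = Set.indicator (Iio v)
            (fun w => ((T - v) ^ (p - 1) * (v - w) ^ (q - 1) : ℝ) • f w) w from
          congrFun (hFw v) w]
        exact norm_indicator_eq_indicator_norm _ w
      rw [hnorm, integral_indicator measurableSet_Iio, hμ,
        Measure.restrict_restrict measurableSet_Iio, Ioo_inter_Iio hv.2.le]
      refine setIntegral_congr_fun measurableSet_Ioo fun w hw => ?_
      rw [norm_smul, Real.norm_eq_abs, abs_of_nonneg (mul_nonneg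
        (Real.rpow_nonneg (by linarith [hv.2] : (0:ℝ) ≤ T - v) _)
        (Real.rpow_nonneg (by linarith [hw.2] : (0:ℝ) ≤ v - w) _))]
    rw [h1]
    have hker : IntegrableOn (fun w => ((v - w) ^ (q - 1) : ℝ) * ‖f w‖) (Ioo A v) :=
      ker_cont_integrableOn (by linarith) hf.norm
    have hint1 : IntegrableOn
        (fun w => ((T - v) ^ (p - 1) * (v - w) ^ (q - 1)) * ‖f w‖) (Ioo A v) :=
      IntegrableOn.congr_fun (hker.const_mul ((T - v) ^ (p - 1)))
        (fun w hw => by ring) measurableSet_Ioo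
    have hint2 : IntegrableOn
        (fun w => ((T - v) ^ (p - 1) * (v - w) ^ (q - 1)) * C) (Ioo A v) :=
      IntegrableOn.congr_fun ((integrableOn_Tsub_rpow A v (q - 1) (by linarith)).const_mul
        ((T - v) ^ (p - 1) * C)) (fun w hw => by ring) measurableSet_Ioo
    have hmono : (∫ w in Ioo A v, ((T - v) ^ (p - 1) * (v - w) ^ (q - 1)) * ‖f w‖)
        ≤ ∫ w in Ioo A v, ((T - v) ^ (p - 1) * (v - w) ^ (q - 1)) * C := by
      refine setIntegral_mono_on hint1 hint2 measurableSet_Ioo fun w hw => ?_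
      have hfw : ‖f w‖ ≤ C := hC w ⟨hw.1.le, hw.2.le.trans hv.2.le⟩
      have hnn : (0:ℝ) ≤ (T - v) ^ (p - 1) * (v - w) ^ (q - 1) := mul_nonneg
        (Real.rpow_nonneg (by linarith [hv.2]) _) (Real.rpow_nonneg (by linarith [hw.2]) _)
      exact mul_le_mul_of_nonneg_left hfw hnn
    refine hmono.trans ?_
    have h2 : (∫ w in Ioo A v, ((T - v) ^ (p - 1) * (v - w) ^ (q - 1)) * C)
        = ((T - v) ^ (p - 1) * C) * ∫ w in Ioo A v, (v - w) ^ (q - 1) := by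
      rw [← integral_const_mul]
      refine setIntegral_congr_fun measurableSet_Ioo fun w hw => by ring
    rw [h2, integral_Tsub_rpow A v (q - 1) (by linarith) hv.1.le, sub_add_cancel]
    have hq' : (v - A) ^ q ≤ (T - A) ^ q :=
      Real.rpow_le_rpow (by linarith [hv.1]) (by linarith [hv.2]) hq.le
    have h3 : (0:ℝ) ≤ (T - v) ^ (p - 1) := Real.rpow_nonneg (by linarith [hv.2]) _
    calc (T - v) ^ (p - 1) * C * ((v - A) ^ q / q)
        ≤ (T - v) ^ (p - 1) * C * ((T - A) ^ q / q) :=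
          mul_le_mul_of_nonneg_left ((div_le_div_iff_of_pos_right hq).mpr hq') (mul_nonneg h3 hC0)
      _ = C * (T - A) ^ q / q * (T - v) ^ (p - 1) := by ring
  -- integrability of the norm-section function
  have hnormMeas : AEStronglyMeasurable (fun v => ∫ w, ‖F (v, w)‖ ∂μ) μ :=
    hFm.norm.integral_prod_right'
  have hnormInt : Integrable (fun v => ∫ w, ‖F (v, w)‖ ∂μ) μ := by
    refine Integrable.mono'
      ((integrableOn_Tsub_rpow A T (p - 1) (by linarith)).const_mul (C * (T - A) ^ q / q))
      hnormMeas ?_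
    refine (ae_restrict_iff' measurableSet_Ioo).mpr (Filter.Eventually.of_forall fun v hv => ?_)
    rw [Real.norm_eq_abs, abs_of_nonneg (integral_nonneg fun w => norm_nonneg _)]
    exact hnormVal v hv
  -- product integrability
  have hFint : Integrable F (μ.prod μ) := by
    refine (integrable_prod_iff hFm).mpr ⟨?_, hnormInt⟩
    exact (ae_restrict_iff' measurableSet_Ioo).mpr (Filter.Eventually.of_forall hsecInt)
  -- part 1 : outer integrability
  have hOuter : IntegrableOn (fun v => ((T - v) ^ (p - 1) : ℝ) •
      ∫ w in Ioo A v, ((v - w) ^ (q - 1) : ℝ) • f w) (Ioo A T) := by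
    have := hFint.integral_prod_left
    refine this.congr ?_
    refine (ae_restrict_iff' measurableSet_Ioo).mpr (Filter.Eventually.of_forall fun v hv => ?_)
    exact (hsecVal v hv)
  refine ⟨hOuter, ?_⟩
  -- now the value, via Fubini
  have hswap : (∫ v, ∫ w, F (v, w) ∂μ ∂μ) = ∫ w, ∫ v, F (v, w) ∂μ ∂μ :=
    integral_integral_swap hFint
  have hL : (∫ v in Ioo A T, ((T - v) ^ (p - 1) : ℝ) •
      ∫ w in Ioo A v, ((v - w) ^ (q - 1) : ℝ) • f w) = ∫ v, ∫ w, F (v, w) ∂μ ∂μ := by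
    refine (setIntegral_congr_fun measurableSet_Ioo fun v hv => ?_).symm
    exact hsecVal v hv
  have hR : (∫ w, ∫ v, F (v, w) ∂μ ∂μ)
      = (Real.Gamma p * Real.Gamma q / Real.Gamma (p + q)) •
          ∫ w in Ioo A T, ((T - w) ^ (p + q - 1) : ℝ) • f w := by
    rw [← integral_smul]
    refine setIntegral_congr_fun measurableSet_Ioo fun w hw => ?_
    have h1 : (∫ v, F (v, w) ∂μ)
        = ∫ v in Ioo w T, (((T - v) ^ (p - 1) * (v - w) ^ (q - 1) : ℝ)) • f w := by
      rw [hFv w, integral_indicator measurableSet_Ioi, hμ,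
        Measure.restrict_restrict measurableSet_Ioi, Ioo_inter_Ioi hw.1.le]
    rw [h1]
    have h2 : (∫ v in Ioo w T, (((T - v) ^ (p - 1) * (v - w) ^ (q - 1) : ℝ)) • f w)
        = (∫ v in Ioo w T, ((T - v) ^ (p - 1) * (v - w) ^ (q - 1) : ℝ)) • f w :=
      integral_smul_const _ _
    rw [h2, rl_beta hw.2 hp hq, mul_smul]
  rw [hL, hswap, hR]


lemma katugampola_congr {α ρ a t : ℝ} (hat : a ≤ t) {u v : ℝ → ℂ}
    (huv : ∀ s ∈ Ioo a t, u s = v s) :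
    katugampolaIntegralC α ρ a u t = katugampolaIntegralC α ρ a v t := by
  unfold katugampolaIntegralC
  rw [intervalIntegral.integral_of_le hat, intervalIntegral.integral_of_le hat,
    integral_Ioc_eq_integral_Ioo, integral_Ioc_eq_integral_Ioo]
  congr 1
  exact setIntegral_congr_fun measurableSet_Ioo fun s hs => by rw [huv s hs]

lemma katugampola_self (α ρ a : ℝ) (u : ℝ → ℂ) :
    katugampolaIntegralC α ρ a u a = 0 := by
  unfold katugampolaIntegralC
  rw [intervalIntegral.integral_same, mul_zero]

/-- The Katugampola integral of a function of `s ^ ρ`, in Riemann–Liouville form. -/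
lemma bridge {α ρ a t : ℝ} (hρ : 0 < ρ) (ha : 0 < a) (hat : a < t) (G : ℝ → ℂ) :
    katugampolaIntegralC α ρ a (fun s => G (s ^ ρ)) t
      = ((ρ ^ (-α) / Real.Gamma α : ℝ) : ℂ) *
          ∫ v in Ioo (a ^ ρ) (t ^ ρ), ((t ^ ρ - v) ^ (α - 1) : ℝ) • G v := by
  rw [katugampolaIntegralC, intervalIntegral.integral_of_le hat.le, integral_Ioc_eq_integral_Ioo,
    cov hρ ha hat (fun v => ((t ^ ρ - v) ^ (α - 1) : ℝ) • G v)]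
  rw [← integral_const_mul, ← integral_const_mul]
  refine setIntegral_congr_fun measurableSet_Ioo fun s hs => ?_
  have hx : 0 < t ^ ρ - s ^ ρ := sub_pos.mpr (Real.rpow_lt_rpow (ha.trans hs.1).le hs.2 hρ)
  have e1 : ((t ^ ρ - s ^ ρ) ^ (α - 1) : ℝ) = ((t ^ ρ - s ^ ρ) ^ (1 - α))⁻¹ := by
    rw [← Real.rpow_neg hx.le]
    congr 1
    ring
  have e2 : (ρ ^ (-α) : ℝ) * ρ = ρ ^ (1 - α) := by
    rw [show (1 - α) = -α + 1 by ring, Real.rpow_add hρ, Real.rpow_one]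
  have hxne : ((t ^ ρ - s ^ ρ) ^ (1 - α) : ℝ) ≠ 0 := (Real.rpow_pos_of_pos hx _).ne'
  have hΓ : Real.Gamma α = Real.Gamma α := rfl
  rw [smul_comm, Complex.real_smul, Complex.real_smul, e1]
  push_cast
  rw [← e2]
  by_cases hG : Real.Gamma α = 0
  · rw [hG]; push_cast; ring
  · field_simp
    push_cast
    ring

lemma ker_pow_integrableOn {A T r u : ℝ} (hr : -1 < r) (hu : 0 ≤ u) :
    IntegrableOn (fun v => (T - v) ^ r * (v - A) ^ u) (Ioo A T) := by
  rcases le_or_gt T A with h | h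
  · rw [Ioo_eq_empty (fun hc => absurd (hc.trans_le h) (lt_irrefl A))]
    exact integrableOn_empty
  refine Integrable.mono' ((integrableOn_Tsub_rpow A T r hr).const_mul ((T - A) ^ u)) ?_ ?_
  · refine ContinuousOn.aestronglyMeasurable ?_ measurableSet_Ioo
    refine ContinuousOn.mul ?_ ?_
    · exact ContinuousOn.rpow_const ((continuous_const.sub continuous_id).continuousOn)
        (fun v hv => Or.inl (by intro hc; have := sub_eq_zero.mp hc; nlinarith [hv.2]))
    · exact ((Real.continuous_rpow_const hu).comp
        (continuous_id.sub continuous_const)).continuousOn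
  · refine (ae_restrict_iff' measurableSet_Ioo).mpr (Filter.Eventually.of_forall fun v hv => ?_)
    have h1 : (0:ℝ) ≤ (T - v) ^ r := Real.rpow_nonneg (by linarith [hv.2]) _
    have h2 : (0:ℝ) ≤ (v - A) ^ u := Real.rpow_nonneg (by linarith [hv.1]) _
    rw [Real.norm_eq_abs, abs_of_nonneg (mul_nonneg h1 h2)]
    calc (T - v) ^ r * (v - A) ^ u
        ≤ (T - v) ^ r * (T - A) ^ u := mul_le_mul_of_nonneg_left
          (Real.rpow_le_rpow (by linarith [hv.1]) (by linarith [hv.2]) hu) h1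
      _ = (T - A) ^ u * (T - v) ^ r := by ring


/-- coefficient of the power terms -/
noncomputable def Ec (lam : ℂ) (ρ α : ℝ) (k : ℕ) : ℂ :=
  lam ^ k * ((ρ ^ (-((k : ℝ) * α)) : ℝ) : ℂ) / ((Real.Gamma ((k : ℝ) * α + 1) : ℝ) : ℂ)

/-- coefficient of the kernel terms -/
noncomputable def Gcc (lam : ℂ) (ρ α : ℝ) (k : ℕ) : ℂ :=
  lam ^ k * ((ρ ^ (-(α * (k : ℝ) + α)) : ℝ) : ℂ) / ((Real.Gamma (α * (k : ℝ) + α) : ℝ) : ℂ)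

/-- The inductive invariant: closed form of the successive approximations, in
Riemann–Liouville coordinates. -/
lemma key_lemma (α ρ a : ℝ) (hα0 : 0 < α) (hα1 : α < 1)
    (hρ : 0 < ρ) (ha : 0 < a) (lam c : ℂ) (h : ℝ → ℂ) (hb : ℝ → ℂ) (hbc : Continuous hb)
    (hbs : ∀ s, a < s → hb (s ^ ρ) = h s) (u : ℕ → ℝ → ℂ)
    (hu0 : ∀ t, u 0 t = c)
    (hrec : ∀ n t, u (n + 1) t = c + lam * katugampolaIntegralC α ρ a (u n) t
      + katugampolaIntegralC α ρ a h t) :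
    ∀ n : ℕ, ∀ t, a < t →
      u n t = c * (∑ k ∈ Finset.range (n + 1), Ec lam ρ α k
            * (((t ^ ρ - a ^ ρ) ^ ((k : ℝ) * α) : ℝ) : ℂ))
        + ∑ k ∈ Finset.range n, Gcc lam ρ α k
            * ∫ w in Ioo (a ^ ρ) (t ^ ρ), ((t ^ ρ - w) ^ (α * (k : ℝ) + α - 1) : ℝ) • hb w := by
  have hΓα : Real.Gamma α ≠ 0 := (Real.Gamma_pos_of_pos hα0).ne'
  intro n
  induction n with
  | zero =>
    intro t ht
    rw [hu0]
    simp [Ec, Real.Gamma_one]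
  | succ n ih =>
    intro t ht
    have hT : a ^ ρ < t ^ ρ := Real.rpow_lt_rpow ha.le ht hρ
    set A := a ^ ρ with hA
    set T := t ^ ρ with hTdef
    -- the closed form of `u n`, as a function of `v = s ^ ρ`
    set Gn : ℝ → ℂ := fun v =>
      c * (∑ k ∈ Finset.range (n + 1), Ec lam ρ α k * (((v - A) ^ ((k : ℝ) * α) : ℝ) : ℂ))
        + ∑ k ∈ Finset.range n, Gcc lam ρ α k
            * ∫ w in Ioo A v, ((v - w) ^ (α * (k : ℝ) + α - 1) : ℝ) • hb w with hGn
    have hKh : katugampolaIntegralC α ρ a h t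
        = ((ρ ^ (-α) / Real.Gamma α : ℝ) : ℂ) *
            ∫ v in Ioo A T, ((T - v) ^ (α - 1) : ℝ) • hb v := by
      rw [katugampola_congr ht.le (fun s hs => (hbs s hs.1).symm), bridge hρ ha ht hb]
    have hKu : katugampolaIntegralC α ρ a (u n) t
        = ((ρ ^ (-α) / Real.Gamma α : ℝ) : ℂ) *
            ∫ v in Ioo A T, ((T - v) ^ (α - 1) : ℝ) • Gn v := by
      rw [katugampola_congr ht.le (fun s hs => ?_), bridge hρ ha ht Gn]
      exact ih s hs.1
    -- pointwise expansion of the integrand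
    have hpt : ∀ v ∈ Ioo A T, ((T - v) ^ (α - 1) : ℝ) • Gn v
        = (∑ k ∈ Finset.range (n + 1), (c * Ec lam ρ α k) *
            (((T - v) ^ (α - 1) * (v - A) ^ ((k : ℝ) * α) : ℝ) : ℂ))
          + ∑ k ∈ Finset.range n, Gcc lam ρ α k *
              (((T - v) ^ (α - 1) : ℝ) •
                ∫ w in Ioo A v, ((v - w) ^ (α * (k : ℝ) + α - 1) : ℝ) • hb w) := by
      intro v hv
      rw [hGn, Complex.real_smul, mul_add, Finset.mul_sum, Finset.mul_sum, Finset.mul_sum]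
      congr 1
      · refine Finset.sum_congr rfl fun k _ => ?_
        push_cast
        ring
      · refine Finset.sum_congr rfl fun k _ => ?_
        rw [Complex.real_smul]
        ring
    -- integrability of the individual terms
    have hIpow : ∀ k ∈ Finset.range (n + 1), IntegrableOn
        (fun v => (c * Ec lam ρ α k) *
          (((T - v) ^ (α - 1) * (v - A) ^ ((k : ℝ) * α) : ℝ) : ℂ)) (Ioo A T) :=
      fun k _ => ((ker_pow_integrableOn (by linarith) (by positivity)).ofReal.const_mul _)
    have hIker : ∀ k ∈ Finset.range n, IntegrableOn
        (fun v => Gcc lam ρ α k *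
          (((T - v) ^ (α - 1) : ℝ) •
            ∫ w in Ioo A v, ((v - w) ^ (α * (k : ℝ) + α - 1) : ℝ) • hb w)) (Ioo A T) := by
      intro k _
      have hq : 0 < α * (k : ℝ) + α := by positivity
      have := (rl_main hT hα0 hq hbc).1
      exact this.const_mul _
    -- value of the big integral
    have hIv : (∫ v in Ioo A T, ((T - v) ^ (α - 1) : ℝ) • Gn v)
        = (∑ k ∈ Finset.range (n + 1), (c * Ec lam ρ α k) *
            ((Real.Gamma α * Real.Gamma ((k : ℝ) * α + 1) / Real.Gamma (α + ((k : ℝ) * α + 1))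
              * (T - A) ^ (α + ((k : ℝ) * α + 1) - 1) : ℝ) : ℂ))
          + ∑ k ∈ Finset.range n, Gcc lam ρ α k *
              ((Real.Gamma α * Real.Gamma (α * (k : ℝ) + α)
                  / Real.Gamma (α + (α * (k : ℝ) + α)) : ℝ) •
                ∫ w in Ioo A T, ((T - w) ^ (α + (α * (k : ℝ) + α) - 1) : ℝ) • hb w) := by
      rw [setIntegral_congr_fun measurableSet_Ioo hpt]
      rw [integral_add (integrable_finset_sum _ hIpow) (integrable_finset_sum _ hIker),
        integral_finset_sum _ hIpow, integral_finset_sum _ hIker]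
      congr 1
      · refine Finset.sum_congr rfl fun k _ => ?_
        rw [integral_const_mul,
          show (∫ v in Ioo A T, (((T - v) ^ (α - 1) * (v - A) ^ ((k : ℝ) * α) : ℝ) : ℂ))
            = (((∫ v in Ioo A T, (T - v) ^ (α - 1) * (v - A) ^ ((k : ℝ) * α)) : ℝ) : ℂ) from
          integral_ofReal]
        have hq1 : (0:ℝ) < (k : ℝ) * α + 1 := by positivity
        have hbv := rl_beta hT hα0 hq1
        rw [show ((k : ℝ) * α + 1) - 1 = (k : ℝ) * α by ring] at hbv
        rw [hbv]
      · refine Finset.sum_congr rfl fun k _ => ?_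
        rw [integral_const_mul]
        have hq : 0 < α * (k : ℝ) + α := by positivity
        rw [(rl_main hT hα0 hq hbc).2]
    -- now assemble
    rw [hrec n t, hKh, hKu, hIv]
    -- reindex the target sums
    rw [Finset.sum_range_succ' (fun k => Ec lam ρ α k * (((T - A) ^ ((k : ℝ) * α) : ℝ) : ℂ)) (n + 1),
      Finset.sum_range_succ' (fun k => Gcc lam ρ α k *
        ∫ w in Ioo A T, ((T - w) ^ (α * (k : ℝ) + α - 1) : ℝ) • hb w) n]
    have hE0 : Ec lam ρ α 0 * (((T - A) ^ ((0 : ℕ) * α : ℝ) : ℝ) : ℂ) = 1 := by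
      simp [Ec, Real.Gamma_one]
    have hG0 : Gcc lam ρ α 0 *
        (∫ w in Ioo A T, ((T - w) ^ (α * ((0:ℕ) : ℝ) + α - 1) : ℝ) • hb w)
        = ((ρ ^ (-α) / Real.Gamma α : ℝ) : ℂ) *
            ∫ v in Ioo A T, ((T - v) ^ (α - 1) : ℝ) • hb v := by
      have e1 : α * ((0:ℕ) : ℝ) + α - 1 = α - 1 := by push_cast; ring
      have e2 : α * ((0:ℕ) : ℝ) + α = α := by push_cast; ring
      rw [e1, Gcc, e2]
      norm_num
    -- match term by term
    have hPow : lam * (((ρ ^ (-α) / Real.Gamma α : ℝ) : ℂ) *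
        ∑ k ∈ Finset.range (n + 1), (c * Ec lam ρ α k) *
          ((Real.Gamma α * Real.Gamma ((k : ℝ) * α + 1) / Real.Gamma (α + ((k : ℝ) * α + 1))
            * (T - A) ^ (α + ((k : ℝ) * α + 1) - 1) : ℝ) : ℂ))
        = c * ∑ k ∈ Finset.range (n + 1), Ec lam ρ α (k + 1) *
            (((T - A) ^ (((k + 1 : ℕ) : ℝ) * α) : ℝ) : ℂ) := by
      rw [Finset.mul_sum, Finset.mul_sum, Finset.mul_sum]
      refine Finset.sum_congr rfl fun k _ => ?_
      have e1 : α + ((k : ℝ) * α + 1) - 1 = ((k + 1 : ℕ) : ℝ) * α := by push_cast; ring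
      have e2 : α + ((k : ℝ) * α + 1) = ((k + 1 : ℕ) : ℝ) * α + 1 := by push_cast; ring
      have e3 : (ρ ^ (-α) : ℝ) * ρ ^ (-((k : ℝ) * α)) = ρ ^ (-(((k + 1 : ℕ) : ℝ) * α)) := by
        rw [← Real.rpow_add hρ]
        congr 1
        push_cast
        ring
      rw [e1, e2, Ec, Ec]
      set r1 : ℝ := ρ ^ (-α) with hr1
      set r2 : ℝ := ρ ^ (-((k : ℝ) * α)) with hr2
      set r3 : ℝ := ρ ^ (-(((k + 1 : ℕ) : ℝ) * α)) with hr3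
      set g1 : ℝ := Real.Gamma α with hg1
      set g2 : ℝ := Real.Gamma ((k : ℝ) * α + 1) with hg2
      set g3 : ℝ := Real.Gamma (((k + 1 : ℕ) : ℝ) * α + 1) with hg3
      set X : ℝ := (T - A) ^ (((k + 1 : ℕ) : ℝ) * α) with hX
      have hg2ne : (g2 : ℂ) ≠ 0 := Complex.ofReal_ne_zero.mpr
        (ne_of_gt (by rw [hg2]; exact Real.Gamma_pos_of_pos (by positivity)))
      have hg3ne : (g3 : ℂ) ≠ 0 := Complex.ofReal_ne_zero.mpr
        (ne_of_gt (by rw [hg3]; exact Real.Gamma_pos_of_pos (by positivity)))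
      have hg1ne : (g1 : ℂ) ≠ 0 := Complex.ofReal_ne_zero.mpr hΓα
      have hr3C : (r3 : ℂ) = (r1 : ℂ) * (r2 : ℂ) := by
        rw [← Complex.ofReal_mul]
        exact_mod_cast congrArg Complex.ofReal e3.symm
      rw [pow_succ]
      push_cast
      rw [hr3C]
      field_simp
    have hKer : lam * (((ρ ^ (-α) / Real.Gamma α : ℝ) : ℂ) *
        ∑ k ∈ Finset.range n, Gcc lam ρ α k *
          ((Real.Gamma α * Real.Gamma (α * (k : ℝ) + α)
              / Real.Gamma (α + (α * (k : ℝ) + α)) : ℝ) •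
            ∫ w in Ioo A T, ((T - w) ^ (α + (α * (k : ℝ) + α) - 1) : ℝ) • hb w))
        = ∑ k ∈ Finset.range n, Gcc lam ρ α (k + 1) *
            ∫ w in Ioo A T, ((T - w) ^ (α * ((k + 1 : ℕ) : ℝ) + α - 1) : ℝ) • hb w := by
      rw [Finset.mul_sum, Finset.mul_sum]
      refine Finset.sum_congr rfl fun k _ => ?_
      have e1 : α + (α * (k : ℝ) + α) - 1 = α * ((k + 1 : ℕ) : ℝ) + α - 1 := by push_cast; ring
      have e2 : α + (α * (k : ℝ) + α) = α * ((k + 1 : ℕ) : ℝ) + α := by push_cast; ring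
      have e3 : (ρ ^ (-α) : ℝ) * ρ ^ (-(α * (k : ℝ) + α))
          = ρ ^ (-(α * ((k + 1 : ℕ) : ℝ) + α)) := by
        rw [← Real.rpow_add hρ]
        congr 1
        push_cast
        ring
      rw [e1, e2, Gcc, Gcc, Complex.real_smul]
      set r1 : ℝ := ρ ^ (-α) with hr1
      set r2 : ℝ := ρ ^ (-(α * (k : ℝ) + α)) with hr2
      set r3 : ℝ := ρ ^ (-(α * ((k + 1 : ℕ) : ℝ) + α)) with hr3
      set g1 : ℝ := Real.Gamma α with hg1
      set g2 : ℝ := Real.Gamma (α * (k : ℝ) + α) with hg2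
      set g3 : ℝ := Real.Gamma (α * ((k + 1 : ℕ) : ℝ) + α) with hg3
      set W : ℂ := ∫ w in Ioo A T, ((T - w) ^ (α * ((k + 1 : ℕ) : ℝ) + α - 1) : ℝ) • hb w
        with hW
      have hg2ne : (g2 : ℂ) ≠ 0 := Complex.ofReal_ne_zero.mpr
        (ne_of_gt (by rw [hg2]; exact Real.Gamma_pos_of_pos (by positivity)))
      have hg3ne : (g3 : ℂ) ≠ 0 := Complex.ofReal_ne_zero.mpr
        (ne_of_gt (by rw [hg3]; exact Real.Gamma_pos_of_pos (by positivity)))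
      have hg1ne : (g1 : ℂ) ≠ 0 := Complex.ofReal_ne_zero.mpr hΓα
      have hr3C : (r3 : ℂ) = (r1 : ℂ) * (r2 : ℂ) := by
        rw [← Complex.ofReal_mul]
        exact_mod_cast congrArg Complex.ofReal e3.symm
      rw [pow_succ]
      push_cast
      rw [hr3C]
      field_simp
    rw [hE0, hG0]
    linear_combination hPow + hKer


end SAF

open SAF

/-- Closed form of the successive approximations
`u₀ = c`, `u_{n+1} = c + λ I_{a+}^{α,ρ} u_n + I_{a+}^{α,ρ} h`. -/
theorem successive_approximations_formula (α ρ a : ℝ) (hα0 : 0 < α) (hα1 : α < 1)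
    (hρ : 0 < ρ) (ha : 0 < a) (lam c : ℂ) (h : ℝ → ℂ)
    (hh : ContinuousOn h (Set.Ici a)) (u : ℕ → ℝ → ℂ)
    (hu0 : ∀ t, u 0 t = c)
    (hrec : ∀ n t, u (n + 1) t = c + lam * katugampolaIntegralC α ρ a (u n) t
      + katugampolaIntegralC α ρ a h t) :
    ∀ n : ℕ, 1 ≤ n → ∀ t ≥ a,
      u n t = c * (∑ k ∈ Finset.range (n + 1),
            lam ^ k / (Real.Gamma (k * α + 1) : ℂ)
              * ((((t ^ ρ - a ^ ρ) / ρ) ^ ((k : ℝ) * α) : ℝ) : ℂ))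
        + ∫ s in a..t, ((((t ^ ρ - s ^ ρ) / ρ) ^ (α - 1) : ℝ) : ℂ)
            * ((s ^ (ρ - 1) : ℝ) : ℂ)
            * (∑ k ∈ Finset.range n,
                lam ^ k / (Real.Gamma (α * k + α) : ℂ)
                  * ((((t ^ ρ - s ^ ρ) / ρ) ^ (α * (k : ℝ)) : ℝ) : ℂ))
            * h s := by
  have hΓα : Real.Gamma α ≠ 0 := (Real.Gamma_pos_of_pos hα0).ne'
  have hρinv : (0:ℝ) ≤ ρ⁻¹ := by positivity
  set h₀ : ℝ → ℂ := fun s => h (max s a) with hh₀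
  have hh₀c : Continuous h₀ := hh.comp_continuous
    (continuous_id.max continuous_const) (fun x => mem_Ici.mpr (le_max_right _ _))
  set hb : ℝ → ℂ := fun w => h₀ (w ^ ρ⁻¹) with hhb
  have hbc : Continuous hb := hh₀c.comp (Real.continuous_rpow_const hρinv)
  have hbs : ∀ s, a < s → hb (s ^ ρ) = h s := by
    intro s hs
    have h1 : (s ^ ρ) ^ ρ⁻¹ = s := Real.rpow_rpow_inv (by linarith) hρ.ne'
    simp only [hhb, hh₀, h1, max_eq_left hs.le]
  have key := key_lemma α ρ a hα0 hα1 hρ ha lam c h hb hbc hbs u hu0 hrec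
  have hua : ∀ n, u n a = c := by
    intro n
    cases n with
    | zero => exact hu0 a
    | succ n => rw [hrec, katugampola_self, katugampola_self, mul_zero, add_zero, add_zero]
  intro n hn t ht
  rcases eq_or_lt_of_le ht with heq | hlt
  · -- t = a
    rw [← heq, hua n, intervalIntegral.integral_same, add_zero, sub_self, zero_div]
    have hsum : (∑ k ∈ Finset.range (n + 1),
        lam ^ k / (Real.Gamma (k * α + 1) : ℂ) * (((0:ℝ) ^ ((k : ℝ) * α) : ℝ) : ℂ)) = 1 := by
      rw [Finset.sum_eq_single_of_mem 0 (Finset.mem_range.mpr (by omega))]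
      · simp [Real.Gamma_one]
      · intro k _ hk
        rw [Real.zero_rpow (mul_ne_zero (Nat.cast_ne_zero.mpr hk) hα0.ne')]
        simp
    rw [hsum, mul_one]
  · -- a < t
    rw [key n t hlt]
    have hTA : (0:ℝ) ≤ t ^ ρ - a ^ ρ :=
      sub_nonneg.mpr (Real.rpow_le_rpow ha.le hlt.le hρ.le)
    congr 1
    · congr 1
      refine Finset.sum_congr rfl fun k _ => ?_
      have hdiv : ((t ^ ρ - a ^ ρ) / ρ) ^ ((k : ℝ) * α)
          = (t ^ ρ - a ^ ρ) ^ ((k : ℝ) * α) * ρ ^ (-((k : ℝ) * α)) := by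
        rw [Real.div_rpow hTA hρ.le, Real.rpow_neg hρ.le, div_eq_mul_inv]
      rw [hdiv, Ec]
      push_cast
      ring
    · rw [intervalIntegral.integral_of_le hlt.le, integral_Ioc_eq_integral_Ioo]
      have hint : ∀ k ∈ Finset.range n, IntegrableOn
          (fun s => Gcc lam ρ α k * ((ρ * s ^ (ρ - 1)) •
            (((t ^ ρ - s ^ ρ) ^ (α * (k : ℝ) + α - 1) : ℝ) • hb (s ^ ρ)))) (Ioo a t) := by
        intro k _
        have hq : (0:ℝ) < α * (k : ℝ) + α := by positivity
        exact (cov_integrableOn hρ ha hlt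
          (ker_cont_integrableOn (by linarith) hbc)).const_mul _
      have hptw : ∀ s ∈ Ioo a t,
          ((((t ^ ρ - s ^ ρ) / ρ) ^ (α - 1) : ℝ) : ℂ) * ((s ^ (ρ - 1) : ℝ) : ℂ)
            * (∑ k ∈ Finset.range n, lam ^ k / (Real.Gamma (α * k + α) : ℂ)
                * ((((t ^ ρ - s ^ ρ) / ρ) ^ (α * (k : ℝ)) : ℝ) : ℂ)) * h s
          = ∑ k ∈ Finset.range n, Gcc lam ρ α k * ((ρ * s ^ (ρ - 1)) •
              (((t ^ ρ - s ^ ρ) ^ (α * (k : ℝ) + α - 1) : ℝ) • hb (s ^ ρ))) := by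
        intro s hs
        have hx : 0 < t ^ ρ - s ^ ρ :=
          sub_pos.mpr (Real.rpow_lt_rpow (ha.trans hs.1).le hs.2 hρ)
        rw [Finset.mul_sum, Finset.sum_mul]
        refine Finset.sum_congr rfl fun k _ => ?_
        rw [hbs s hs.1, Complex.real_smul, Complex.real_smul, Gcc]
        have e1 : (((t ^ ρ - s ^ ρ) / ρ) ^ (α - 1) : ℝ) * ((t ^ ρ - s ^ ρ) / ρ) ^ (α * (k : ℝ))
            = (t ^ ρ - s ^ ρ) ^ (α * (k : ℝ) + α - 1) * (ρ ^ (-(α * (k : ℝ) + α)) * ρ) := by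
          have e0 : (ρ ^ (-(α * (k : ℝ) + α)) : ℝ) * ρ = ρ ^ (-(α * (k : ℝ) + α - 1)) := by
            rw [show -(α * (k : ℝ) + α - 1) = -(α * (k : ℝ) + α) + 1 by ring,
              Real.rpow_add hρ, Real.rpow_one]
          rw [e0, ← Real.rpow_add (div_pos hx hρ),
            show α - 1 + α * (k : ℝ) = α * (k : ℝ) + α - 1 by ring,
            Real.div_rpow hx.le hρ.le, Real.rpow_neg hρ.le, div_eq_mul_inv]
        have e1C : ((((t ^ ρ - s ^ ρ) / ρ) ^ (α - 1) : ℝ) : ℂ)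
              * ((((t ^ ρ - s ^ ρ) / ρ) ^ (α * (k : ℝ)) : ℝ) : ℂ)
            = (((t ^ ρ - s ^ ρ) ^ (α * (k : ℝ) + α - 1) : ℝ) : ℂ)
              * (((ρ ^ (-(α * (k : ℝ) + α)) : ℝ) : ℂ) * (ρ : ℂ)) := by
          rw [← Complex.ofReal_mul, e1]
          push_cast
          ring
        have hgC : ((Real.Gamma (α * (k : ℝ) + α) : ℝ) : ℂ) ≠ 0 :=
          Complex.ofReal_ne_zero.mpr (Real.Gamma_pos_of_pos (by positivity)).ne'
        rw [show -(α * (k : ℝ) + α) = -α - α * (k : ℝ) by ring] at e1C ⊢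
        rw [Complex.ofReal_mul]
        linear_combination (((s ^ (ρ - 1) : ℝ) : ℂ) * lam ^ k * h s
          / ((Real.Gamma (α * (k : ℝ) + α) : ℝ) : ℂ)) * e1C
      rw [setIntegral_congr_fun measurableSet_Ioo hptw, integral_finset_sum _ hint]
      refine Finset.sum_congr rfl fun k _ => ?_
      rw [integral_const_mul]
      congr 1
      exact cov hρ ha hlt
        (fun v => (((t ^ ρ - v) ^ (α * (k : ℝ) + α - 1) : ℝ)) • hb v)
end
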